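/- Let (X,d) be a proper geodesic metric space, φ : X → ℝ a Kantorovich potential, and t ∈ (0,1). Then φ_t(x) ≤ φ̄_t(x) for every x ∈ X, and φ_t(x) = φ̄_t(x) holds if and only if there exists a φ-Kantorovich geodesic γ with γ_t = x. -/

import Mathlib

/-- `ψ` is pointwise the `c`-transform of `φ` for the cost `c = d²/2`:
at every point `x`, `ψ x` is a genuine (finite) infimum of `d(x,y)²/2 - φ(y)` over `y`. -/
def IsCTransform {X : Type*} [MetricSpace X] (φ ψ : X → ℝ) : Prop :=
  ∀ x : X, IsGLB {v : ℝ | ∃ y : X, v = dist x y ^ 2 / 2 - φ y} (ψ x)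

/-- `φ` is a Kantorovich potential with (real-valued) conjugate potential `φc`. -/
def IsKantorovichPair {X : Type*} [MetricSpace X] (φ φc : X → ℝ) : Prop :=
  IsCTransform φ φc ∧ IsCTransform φc φ

/-- A constant-speed geodesic parametrized on `[0,1]`. -/
def IsGeodesic {X : Type*} [MetricSpace X] (γ : ℝ → X) : Prop :=
  ∀ s ∈ Set.Icc (0:ℝ) 1, ∀ t ∈ Set.Icc (0:ℝ) 1,
    dist (γ s) (γ t) = |s - t| * dist (γ 0) (γ 1)

/-- A `φ`-Kantorovich geodesic: a geodesic with `φ(γ₀) + φ^c(γ₁) = ℓ(γ)²/2`,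
where `ℓ(γ) = d(γ₀,γ₁)`. -/
def IsKantorovichGeodesic {X : Type*} [MetricSpace X] (φ φc : X → ℝ) (γ : ℝ → X) : Prop :=
  IsGeodesic γ ∧ φ (γ 0) + φc (γ 1) = dist (γ 0) (γ 1) ^ 2 / 2

/-- A metric space is geodesic if every pair of points is joined by a geodesic. -/
def IsGeodesicSpace (X : Type*) [MetricSpace X] : Prop :=
  ∀ x y : X, ∃ γ : ℝ → X, IsGeodesic γ ∧ γ 0 = x ∧ γ 1 = y

/-- The interpolating intermediate-time Kantorovich potential
`φ_t(x) = -inf_y (d(x,y)²/(2t) - φ(y))` for `t ≠ 0`, and `φ_0 = φ`. -/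
noncomputable def interpPotential {X : Type*} [MetricSpace X] (φ : X → ℝ) (t : ℝ) (x : X) : ℝ :=
  if t = 0 then φ x
  else -sInf {v : ℝ | ∃ y : X, v = dist x y ^ 2 / (2 * t) - φ y}

/-- The time-reversed interpolating Kantorovich potential
`φ̄_t(x) = inf_y (d(x,y)²/(2(1-t)) - φ^c(y))` for `t ≠ 1`, and `φ̄_1 = -φ^c`. -/
noncomputable def reversePotential {X : Type*} [MetricSpace X] (φc : X → ℝ) (t : ℝ) (x : X) : ℝ :=
  if t = 1 then -φc x
  else sInf {v : ℝ | ∃ y : X, v = dist x y ^ 2 / (2 * (1 - t)) - φc y}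


private lemma elem_ineq {a b s : ℝ} (hs : 0 < s) (hs1 : s < 1) :
    (a + b) ^ 2 / 2 ≤ a ^ 2 / (2 * s) + b ^ 2 / (2 * (1 - s)) := by
  have h1 : (0:ℝ) < 1 - s := by linarith
  rw [div_add_div _ _ (by positivity) (by positivity), div_le_div_iff₀ (by norm_num) (by positivity)]
  nlinarith [sq_nonneg ((1 - s) * a - s * b), mul_pos hs h1]

/-- Existence of a global minimizer of `y ↦ d(x,y)²/(2s) - φ y` for `s ∈ (0,1)`,
when `φ` is a `c`-transform, on a proper space. -/
private lemma exists_min {X : Type*} [MetricSpace X] [ProperSpace X] (φ φc : X → ℝ)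
    (hφ : ∀ y : X, IsGLB {v : ℝ | ∃ z : X, v = dist y z ^ 2 / 2 - φc z} (φ y))
    (x : X) (s : ℝ) (hs : 0 < s) (hs1 : s < 1) :
    ∃ y₀ : X, ∀ y : X, dist x y₀ ^ 2 / (2 * s) - φ y₀ ≤ dist x y ^ 2 / (2 * s) - φ y := by
  have hds : (0:ℝ) < 1 - s := by linarith
  set f : X → ℝ := fun y => dist x y ^ 2 / (2 * s) - φ y with hf
  have hub : ∀ y z : X, φ y ≤ dist y z ^ 2 / 2 - φc z := fun y z => (hφ y).1 ⟨z, rfl⟩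
  set G : X → X → ℝ := fun z y => dist x y ^ 2 / (2 * s) - (dist y z ^ 2 / 2 - φc z) with hG
  have hGc : ∀ z : X, Continuous (G z) := by
    intro z
    apply Continuous.sub
    · exact ((continuous_const.dist continuous_id).pow 2).div_const _
    · exact (((continuous_id.dist continuous_const).pow 2).div_const _).sub continuous_const
  have hGle : ∀ z y : X, G z y ≤ f y := by
    intro z y
    have := hub y z
    simp only [hG, hf]
    linarith
  -- sublevel sets of f are closed
  have hclosed : ∀ c : ℝ, IsClosed {y : X | f y ≤ c} := by
    intro c
    rw [← isOpen_compl_iff, isOpen_iff_mem_nhds]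
    intro y₀ hy₀
    simp only [Set.mem_compl_iff, Set.mem_setOf_eq, not_le] at hy₀
    obtain ⟨v, ⟨z, hz⟩, -, hv2⟩ := (hφ y₀).exists_between
      (show φ y₀ < φ y₀ + (f y₀ - c) by linarith)
    have hGy₀ : c < G z y₀ := by
      rw [hz] at hv2
      simp only [hG, hf] at *
      linarith
    have hmem : {y : X | c < G z y} ∈ nhds y₀ :=
      (isOpen_lt continuous_const (hGc z)).mem_nhds hGy₀
    filter_upwards [hmem] with y hy
    simp only [Set.mem_compl_iff, Set.mem_setOf_eq, not_le]
    exact lt_of_lt_of_le hy (hGle z y)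
  -- coercivity
  set A : ℝ := (f x - φc x) * (2 * s) / (1 - s) with hA
  set R : ℝ := 1 + Real.sqrt A with hR
  have hR1 : (1:ℝ) ≤ R := by
    have := Real.sqrt_nonneg A
    simp only [hR]; linarith
  have hcoer : ∀ y : X, R < dist y x → f x < f y := by
    intro y hy
    have hdy : 1 < dist y x := lt_of_le_of_lt hR1 hy
    have hAd : A < dist y x ^ 2 := by
      rcases le_or_gt A 0 with h | h
      · nlinarith
      · have h2 : Real.sqrt A < dist y x := by
          have := Real.sqrt_nonneg A
          simp only [hR] at hy; linarith
        calc A = Real.sqrt A ^ 2 := (Real.sq_sqrt h.le).symm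
        _ < dist y x ^ 2 := by nlinarith [Real.sqrt_nonneg A]
    have key : (f x - φc x) * (2 * s) < dist y x ^ 2 * (1 - s) := by
      rw [hA, div_lt_iff₀ hds] at hAd
      linarith
    have h1 : dist x y ^ 2 / (2 * s) - dist y x ^ 2 / 2 + φc x ≤ f y := by
      have := hub y x
      simp only [hf, dist_comm x y]
      linarith
    have e : dist y x ^ 2 / (2 * s) - dist y x ^ 2 / 2 = dist y x ^ 2 * (1 - s) / (2 * s) := by
      field_simp
    have h2 : f x - φc x < dist y x ^ 2 * (1 - s) / (2 * s) := by
      rw [lt_div_iff₀ (by positivity)]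
      linarith
    rw [dist_comm x y, e] at h1
    exact lt_of_lt_of_le (by linarith) h1
  -- minimize over a closed ball
  have hxK : x ∈ Metric.closedBall x R := Metric.mem_closedBall_self (by linarith)
  obtain ⟨w, hwK, hw⟩ := (isCompact_closedBall x R).exists_isMinOn ⟨x, hxK⟩
    (hGc x).continuousOn
  have hbdd : BddBelow (f '' Metric.closedBall x R) := by
    refine ⟨G x w, ?_⟩
    rintro v ⟨y, hyK, rfl⟩
    exact le_trans (hw hyK) (hGle x y)
  have hne : (f '' Metric.closedBall x R).Nonempty := ⟨f x, x, hxK, rfl⟩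
  set m : ℝ := sInf (f '' Metric.closedBall x R) with hm
  set Kn : ℕ → Set X := fun n => Metric.closedBall x R ∩ {y | f y ≤ m + 1 / (n + 1)} with hKn
  have hKne : ∀ n, (Kn n).Nonempty := by
    intro n
    have hlt : m < m + 1 / ((n:ℝ) + 1) := by
      have : (0:ℝ) < 1 / ((n:ℝ) + 1) := by positivity
      linarith
    obtain ⟨v, ⟨y, hyK, rfl⟩, hv⟩ := exists_lt_of_csInf_lt hne hlt
    exact ⟨y, hyK, hv.le⟩
  have hKsub : ∀ n, Kn (n + 1) ⊆ Kn n := by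
    intro n y hy
    refine ⟨hy.1, ?_⟩
    have h2 := hy.2
    simp only [Set.mem_setOf_eq] at h2 ⊢
    have h3 : (1:ℝ) / ((n:ℝ) + 1 + 1) ≤ 1 / ((n:ℝ) + 1) := by
      apply div_le_div_of_nonneg_left (by norm_num) (by positivity) (by linarith)
    push_cast at h2
    linarith
  have hKcl : ∀ n, IsClosed (Kn n) := fun n =>
    Metric.isClosed_closedBall.inter (hclosed _)
  obtain ⟨y₀, hy₀⟩ := IsCompact.nonempty_iInter_of_sequence_nonempty_isCompact_isClosed Kn
    hKsub hKne ((isCompact_closedBall x R).inter_right (hclosed _)) hKcl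
  simp only [Set.mem_iInter] at hy₀
  have hy₀m : f y₀ ≤ m := by
    by_contra h
    push_neg at h
    obtain ⟨n, hn⟩ := exists_nat_one_div_lt (show (0:ℝ) < f y₀ - m by linarith)
    have := (hy₀ n).2
    simp only [Set.mem_setOf_eq] at this
    linarith
  refine ⟨y₀, fun y => ?_⟩
  show f y₀ ≤ f y
  rcases le_or_gt (dist y x) R with hin | hout
  · exact le_trans hy₀m (csInf_le hbdd ⟨y, Metric.mem_closedBall.mpr hin, rfl⟩)
  · have := hcoer y hout
    have hmx : m ≤ f x := csInf_le hbdd ⟨x, hxK, rfl⟩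
    linarith

private lemma glue_geodesic {X : Type*} [MetricSpace X] (hgeo : IsGeodesicSpace X)
    (y z x : X) (t : ℝ) (ht0 : 0 < t) (ht1 : t < 1)
    (hy : dist x y = t * dist y z) (hz : dist x z = (1 - t) * dist y z) :
    ∃ γ : ℝ → X, IsGeodesic γ ∧ γ 0 = y ∧ γ 1 = z ∧ γ t = x := by
  have h1t : (0:ℝ) < 1 - t := by linarith
  obtain ⟨γ₁, hγ₁, g10, g11⟩ := hgeo y x
  obtain ⟨γ₂, hγ₂, g20, g21⟩ := hgeo x z
  have hℓ0 : (0:ℝ) ≤ dist y z := dist_nonneg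
  have d1 : ∀ u ∈ Set.Icc (0:ℝ) 1, ∀ v ∈ Set.Icc (0:ℝ) 1,
      dist (γ₁ u) (γ₁ v) = |u - v| * (t * dist y z) := by
    intro u hu v hv
    rw [hγ₁ u hu v hv, g10, g11, dist_comm y x, hy]
  have d2 : ∀ u ∈ Set.Icc (0:ℝ) 1, ∀ v ∈ Set.Icc (0:ℝ) 1,
      dist (γ₂ u) (γ₂ v) = |u - v| * ((1 - t) * dist y z) := by
    intro u hu v hv
    rw [hγ₂ u hu v hv, g20, g21, hz]
  refine ⟨fun s => if s ≤ t then γ₁ (s / t) else γ₂ ((s - t) / (1 - t)), ?_, ?_, ?_, ?_⟩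
  rotate_left
  · show (if (0:ℝ) ≤ t then γ₁ (0 / t) else γ₂ ((0 - t) / (1 - t))) = y
    rw [if_pos ht0.le, zero_div, g10]
  · show (if (1:ℝ) ≤ t then γ₁ (1 / t) else γ₂ ((1 - t) / (1 - t))) = z
    rw [if_neg (by linarith : ¬ (1:ℝ) ≤ t), div_self h1t.ne', g21]
  · show (if t ≤ t then γ₁ (t / t) else γ₂ ((t - t) / (1 - t))) = x
    rw [if_pos le_rfl, div_self ht0.ne', g11]
  -- IsGeodesic
  have hends : dist (if (0:ℝ) ≤ t then γ₁ (0 / t) else γ₂ ((0 - t) / (1 - t)))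
      (if (1:ℝ) ≤ t then γ₁ (1 / t) else γ₂ ((1 - t) / (1 - t))) = dist y z := by
    rw [if_pos ht0.le, if_neg (by linarith : ¬ (1:ℝ) ≤ t), zero_div, g10,
      div_self h1t.ne', g21]
  have main : ∀ s ∈ Set.Icc (0:ℝ) 1, ∀ s' ∈ Set.Icc (0:ℝ) 1, s ≤ s' →
      dist (if s ≤ t then γ₁ (s / t) else γ₂ ((s - t) / (1 - t)))
        (if s' ≤ t then γ₁ (s' / t) else γ₂ ((s' - t) / (1 - t))) = (s' - s) * dist y z := by
    intro s hs s' hs' hss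
    rcases le_or_gt s' t with h2 | h2
    · have h1 : s ≤ t := le_trans hss h2
      rw [if_pos h1, if_pos h2,
        d1 (s / t) ⟨div_nonneg hs.1 ht0.le, (div_le_one ht0).mpr h1⟩
           (s' / t) ⟨div_nonneg hs'.1 ht0.le, (div_le_one ht0).mpr h2⟩]
      have habs : |s / t - s' / t| = (s' - s) / t := by
        rw [abs_sub_comm, show s' / t - s / t = (s' - s) / t by ring]
        exact abs_of_nonneg (div_nonneg (by linarith) ht0.le)
      rw [habs]
      field_simp
    · rcases le_or_gt s t with h1 | h1
      · -- s ≤ t < s'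
        rw [if_pos h1, if_neg (not_le.mpr h2)]
        have hu2 : (s' - t) / (1 - t) ∈ Set.Icc (0:ℝ) 1 :=
          ⟨div_nonneg (by linarith) h1t.le, (div_le_one h1t).mpr (by linarith [hs'.2])⟩
        have hu1 : s / t ∈ Set.Icc (0:ℝ) 1 :=
          ⟨div_nonneg hs.1 ht0.le, (div_le_one ht0).mpr h1⟩
        have dA : dist (γ₁ (s / t)) x = (t - s) * dist y z := by
          have hd := d1 (s / t) hu1 1 ⟨zero_le_one, le_refl 1⟩
          rw [g11] at hd
          rw [hd]
          have : |s / t - 1| = (t - s) / t := by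
            rw [abs_sub_comm, show (1:ℝ) - s / t = (t - s) / t by field_simp]
            exact abs_of_nonneg (div_nonneg (by linarith) ht0.le)
          rw [this]; field_simp
        have dB : dist x (γ₂ ((s' - t) / (1 - t))) = (s' - t) * dist y z := by
          have hd := d2 0 ⟨le_refl 0, zero_le_one⟩ ((s' - t) / (1 - t)) hu2
          rw [g20] at hd
          rw [hd]
          have : |0 - (s' - t) / (1 - t)| = (s' - t) / (1 - t) := by
            rw [abs_sub_comm, sub_zero]
            exact abs_of_nonneg (div_nonneg (by linarith) h1t.le)
          rw [this]; field_simp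
        have dy' : dist y (γ₁ (s / t)) = s * dist y z := by
          have hd := d1 0 ⟨le_refl 0, zero_le_one⟩ (s / t) hu1
          rw [g10] at hd
          rw [hd]
          have : |0 - s / t| = s / t := by
            rw [abs_sub_comm, sub_zero]
            exact abs_of_nonneg (div_nonneg hs.1 ht0.le)
          rw [this]; field_simp
        have dz' : dist (γ₂ ((s' - t) / (1 - t))) z = (1 - s') * dist y z := by
          have hd := d2 ((s' - t) / (1 - t)) hu2 1 ⟨zero_le_one, le_refl 1⟩
          rw [g21] at hd
          rw [hd]
          have : |(s' - t) / (1 - t) - 1| = (1 - s') / (1 - t) := by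
            rw [abs_sub_comm, show (1:ℝ) - (s' - t) / (1 - t) = (1 - s') / (1 - t) by field_simp; ring]
            exact abs_of_nonneg (div_nonneg (by linarith [hs'.2]) h1t.le)
          rw [this]; field_simp
        apply le_antisymm
        · calc dist (γ₁ (s / t)) (γ₂ ((s' - t) / (1 - t)))
              ≤ dist (γ₁ (s / t)) x + dist x (γ₂ ((s' - t) / (1 - t))) := dist_triangle _ _ _
            _ = (s' - s) * dist y z := by rw [dA, dB]; ring
        · have htri := dist_triangle4 y (γ₁ (s / t)) (γ₂ ((s' - t) / (1 - t))) z
          rw [dy', dz'] at htri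
          nlinarith
      · -- t < s ≤ s'
        rw [if_neg (not_le.mpr h1), if_neg (not_le.mpr h2)]
        have hu1 : (s - t) / (1 - t) ∈ Set.Icc (0:ℝ) 1 :=
          ⟨div_nonneg (by linarith) h1t.le, (div_le_one h1t).mpr (by linarith [hs.2])⟩
        have hu2 : (s' - t) / (1 - t) ∈ Set.Icc (0:ℝ) 1 :=
          ⟨div_nonneg (by linarith) h1t.le, (div_le_one h1t).mpr (by linarith [hs'.2])⟩
        rw [d2 _ hu1 _ hu2]
        have habs : |(s - t) / (1 - t) - (s' - t) / (1 - t)| = (s' - s) / (1 - t) := by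
          rw [abs_sub_comm, show (s' - t) / (1 - t) - (s - t) / (1 - t) = (s' - s) / (1 - t) by ring]
          exact abs_of_nonneg (div_nonneg (by linarith) h1t.le)
        rw [habs]; field_simp
  intro s hs s' hs'
  show dist (if s ≤ t then γ₁ (s / t) else γ₂ ((s - t) / (1 - t)))
      (if s' ≤ t then γ₁ (s' / t) else γ₂ ((s' - t) / (1 - t))) =
    |s - s'| * dist (if (0:ℝ) ≤ t then γ₁ (0 / t) else γ₂ ((0 - t) / (1 - t)))
      (if (1:ℝ) ≤ t then γ₁ (1 / t) else γ₂ ((1 - t) / (1 - t)))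
  rw [hends]
  rcases le_total s s' with hss | hss
  · rw [main s hs s' hs' hss, abs_sub_comm, abs_of_nonneg (by linarith)]
  · rw [dist_comm, main s' hs' s hs hss, abs_of_nonneg (by linarith)]

/-- On a proper geodesic space, for `t ∈ (0,1)`: `φ_t ≤ φ̄_t` everywhere, with equality at
`x` iff `x` is the `t`-point of some `φ`-Kantorovich geodesic. -/
theorem statement2 {X : Type*} [MetricSpace X] [ProperSpace X]
    (hgeo : IsGeodesicSpace X) (φ φc : X → ℝ) (hpair : IsKantorovichPair φ φc)
    (t : ℝ) (ht : t ∈ Set.Ioo (0:ℝ) 1) :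
    (∀ x : X, interpPotential φ t x ≤ reversePotential φc t x) ∧
      (∀ x : X, interpPotential φ t x = reversePotential φc t x ↔
        ∃ γ : ℝ → X, IsKantorovichGeodesic φ φc γ ∧ γ t = x) := by
  obtain ⟨ht0, ht1⟩ := ht
  have hne0 : t ≠ 0 := ne_of_gt ht0
  have hne1 : t ≠ 1 := ne_of_lt ht1
  have h1t : (0:ℝ) < 1 - t := by linarith
  obtain ⟨hφc, hφ⟩ := hpair
  have key : ∀ y z : X, φ y + φc z ≤ dist y z ^ 2 / 2 := by
    intro y z
    have h := (hφ y).1 ⟨z, rfl⟩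
    linarith
  have cross : ∀ x y z : X,
      φ y + φc z ≤ dist x y ^ 2 / (2 * t) + dist x z ^ 2 / (2 * (1 - t)) := by
    intro x y z
    have h1 := key y z
    have htr : dist y z ≤ dist x y + dist x z := by
      rw [dist_comm x y]; exact dist_triangle y x z
    have h2 : dist y z ^ 2 ≤ (dist x y + dist x z) ^ 2 :=
      pow_le_pow_left₀ dist_nonneg htr 2
    have h3 := elem_ineq (a := dist x y) (b := dist x z) ht0 ht1
    linarith
  have part1 : ∀ x : X, interpPotential φ t x ≤ reversePotential φc t x := by
    intro x
    rw [interpPotential, if_neg hne0, reversePotential, if_neg hne1]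
    have hTne : Set.Nonempty {v : ℝ | ∃ z : X, v = dist x z ^ 2 / (2 * (1 - t)) - φc z} :=
      ⟨_, x, rfl⟩
    have hSne : Set.Nonempty {v : ℝ | ∃ y : X, v = dist x y ^ 2 / (2 * t) - φ y} :=
      ⟨_, x, rfl⟩
    apply le_csInf hTne
    rintro w ⟨z, rfl⟩
    rw [neg_le]
    apply le_csInf hSne
    rintro u ⟨y, rfl⟩
    have := cross x y z
    linarith
  refine ⟨part1, fun x => ⟨?_, ?_⟩⟩
  · -- equality implies existence of a Kantorovich geodesic
    intro heq
    obtain ⟨y₀, hy₀⟩ := exists_min φ φc hφ x t ht0 ht1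
    obtain ⟨z₀, hz₀⟩ := exists_min φc φ hφc x (1 - t) h1t (by linarith)
    have hSinf : sInf {v : ℝ | ∃ y : X, v = dist x y ^ 2 / (2 * t) - φ y} =
        dist x y₀ ^ 2 / (2 * t) - φ y₀ :=
      IsLeast.csInf_eq ⟨⟨y₀, rfl⟩, by rintro v ⟨y, rfl⟩; exact hy₀ y⟩
    have hTinf : sInf {v : ℝ | ∃ y : X, v = dist x y ^ 2 / (2 * (1 - t)) - φc y} =
        dist x z₀ ^ 2 / (2 * (1 - t)) - φc z₀ :=
      IsLeast.csInf_eq ⟨⟨z₀, rfl⟩, by rintro v ⟨z, rfl⟩; exact hz₀ z⟩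
    rw [interpPotential, if_neg hne0, reversePotential, if_neg hne1, hSinf, hTinf] at heq
    have hsum : φ y₀ + φc z₀ =
        dist x y₀ ^ 2 / (2 * t) + dist x z₀ ^ 2 / (2 * (1 - t)) := by linarith
    have h1 := key y₀ z₀
    have htr : dist y₀ z₀ ≤ dist x y₀ + dist x z₀ := by
      rw [dist_comm x y₀]; exact dist_triangle y₀ x z₀
    have h2 : dist y₀ z₀ ^ 2 ≤ (dist x y₀ + dist x z₀) ^ 2 :=
      pow_le_pow_left₀ dist_nonneg htr 2
    have h3 := elem_ineq (a := dist x y₀) (b := dist x z₀) ht0 ht1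
    have e2 : dist y₀ z₀ ^ 2 = (dist x y₀ + dist x z₀) ^ 2 := by linarith
    have e3 : (dist x y₀ + dist x z₀) ^ 2 / 2 =
        dist x y₀ ^ 2 / (2 * t) + dist x z₀ ^ 2 / (2 * (1 - t)) := by linarith
    have hℓab : dist y₀ z₀ = dist x y₀ + dist x z₀ := by
      calc dist y₀ z₀ = Real.sqrt (dist y₀ z₀ ^ 2) := (Real.sqrt_sq dist_nonneg).symm
        _ = Real.sqrt ((dist x y₀ + dist x z₀) ^ 2) := by rw [e2]
        _ = dist x y₀ + dist x z₀ := Real.sqrt_sq (by positivity)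
    have hab : (1 - t) * dist x y₀ = t * dist x z₀ := by
      have hsq : ((1 - t) * dist x y₀ - t * dist x z₀) ^ 2 ≤ 0 := by
        have e3' := e3
        field_simp at e3'
        nlinarith [e3']
      have hz : ((1 - t) * dist x y₀ - t * dist x z₀) ^ 2 = 0 :=
        le_antisymm hsq (sq_nonneg _)
      have := pow_eq_zero_iff (n := 2) (by norm_num) |>.mp hz
      linarith
    have ha : dist x y₀ = t * dist y₀ z₀ := by rw [hℓab]; nlinarith [hab]
    have hb : dist x z₀ = (1 - t) * dist y₀ z₀ := by rw [hℓab]; nlinarith [hab]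
    have hmass : φ y₀ + φc z₀ = dist y₀ z₀ ^ 2 / 2 := by linarith
    obtain ⟨γ, hγ, g0, g1, gt⟩ := glue_geodesic hgeo y₀ z₀ x t ht0 ht1 ha hb
    refine ⟨γ, ⟨hγ, ?_⟩, gt⟩
    rw [g0, g1]
    exact hmass
  · -- existence of a Kantorovich geodesic implies equality
    rintro ⟨γ, ⟨hg, hk⟩, rfl⟩
    have htmem : t ∈ Set.Icc (0:ℝ) 1 := ⟨ht0.le, ht1.le⟩
    have d0 : dist (γ t) (γ 0) = t * dist (γ 0) (γ 1) := by
      rw [hg t htmem 0 ⟨le_refl 0, zero_le_one⟩, sub_zero, abs_of_pos ht0]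
    have d1 : dist (γ t) (γ 1) = (1 - t) * dist (γ 0) (γ 1) := by
      rw [hg t htmem 1 ⟨zero_le_one, le_refl 1⟩, abs_sub_comm, abs_of_pos h1t]
    apply le_antisymm (part1 _)
    rw [interpPotential, if_neg hne0, reversePotential, if_neg hne1]
    have hSbdd : BddBelow {v : ℝ | ∃ y : X, v = dist (γ t) y ^ 2 / (2 * t) - φ y} := by
      refine ⟨φc (γ t), ?_⟩
      rintro u ⟨y, rfl⟩
      have := cross (γ t) y (γ t)
      simp only [dist_self] at this
      norm_num at this
      linarith
    have hTbdd : BddBelow {v : ℝ | ∃ y : X, v = dist (γ t) y ^ 2 / (2 * (1 - t)) - φc y} := by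
      refine ⟨φ (γ t), ?_⟩
      rintro u ⟨z, rfl⟩
      have := cross (γ t) (γ t) z
      simp only [dist_self] at this
      norm_num at this
      linarith
    have h1 : sInf {v : ℝ | ∃ y : X, v = dist (γ t) y ^ 2 / (2 * t) - φ y} ≤
        dist (γ t) (γ 0) ^ 2 / (2 * t) - φ (γ 0) := csInf_le hSbdd ⟨γ 0, rfl⟩
    have h2 : sInf {v : ℝ | ∃ y : X, v = dist (γ t) y ^ 2 / (2 * (1 - t)) - φc y} ≤
        dist (γ t) (γ 1) ^ 2 / (2 * (1 - t)) - φc (γ 1) := csInf_le hTbdd ⟨γ 1, rfl⟩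
    rw [d0] at h1
    rw [d1] at h2
    have e1 : (t * dist (γ 0) (γ 1)) ^ 2 / (2 * t) = t * dist (γ 0) (γ 1) ^ 2 / 2 := by
      field_simp
    have e2 : ((1 - t) * dist (γ 0) (γ 1)) ^ 2 / (2 * (1 - t)) =
        (1 - t) * dist (γ 0) (γ 1) ^ 2 / 2 := by
      field_simp
    rw [e1] at h1
    rw [e2] at h2
    linarith
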